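/- Let F be a finite field with q elements, where q ≡ 1 (mod 4). Let A be the set of nonzero quadratic residues (nonzero squares) of F and let B be the set of quadratic nonresidues (nonzero nonsquares) of F. Then |A| = |B| = (q − 1)/2 and (A, B) is a near-factorization of index (q − 1)/4 of the additive group of F: for every nonzero c ∈ F, the number of pairs (a, b) ∈ A × B with a + b = c equals (q − 1)/4, and no pair (a, b) ∈ A × B satisfies a + b = 0. -/

import Mathlib

open Finset

lemma mul_isSquare_iff' {F : Type*} [Field F] [Fintype F] [DecidableEq F]
    (hF : ringChar F ≠ 2) {r a : F} (hr : r ≠ 0) (ha : a ≠ 0) :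
    IsSquare (r * a) ↔ (IsSquare r ↔ IsSquare a) := by
  rw [← quadraticChar_one_iff_isSquare (mul_ne_zero hr ha), map_mul,
    ← quadraticChar_one_iff_isSquare hr, ← quadraticChar_one_iff_isSquare ha]
  rcases quadraticChar_dichotomy hr with h1 | h1 <;>
    rcases quadraticChar_dichotomy ha with h2 | h2 <;>
      simp [h1, h2]

theorem quadratic_residues_near_factorization
    {F : Type*} [Field F] [Fintype F] [DecidableEq F]
    (q : ℕ) (hq : Fintype.card F = q) (hq4 : q % 4 = 1) :
    letI A : Finset F := Finset.univ.filter (fun a => a ≠ 0 ∧ IsSquare a)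
    letI B : Finset F := Finset.univ.filter (fun a => a ≠ 0 ∧ ¬ IsSquare a)
    A.card = (q - 1) / 2 ∧ B.card = (q - 1) / 2 ∧
    (∀ c : F, c ≠ 0 →
      ((A ×ˢ B).filter (fun p => p.1 + p.2 = c)).card = (q - 1) / 4) ∧
    ((A ×ˢ B).filter (fun p => p.1 + p.2 = 0)).card = 0 := by
  set A : Finset F := Finset.univ.filter (fun a => a ≠ 0 ∧ IsSquare a) with hAdef
  set B : Finset F := Finset.univ.filter (fun a => a ≠ 0 ∧ ¬ IsSquare a) with hBdef
  -- basic facts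
  have hchar : ringChar F ≠ 2 := by
    intro h
    have := FiniteField.even_card_of_char_two h
    rw [hq] at this
    omega
  obtain ⟨k, hk⟩ : ∃ k, q = 4 * k + 1 := ⟨q / 4, by omega⟩
  have hq2 : 2 ≤ q := by rw [← hq]; exact Fintype.one_lt_card
  have hkpos : 0 < k := by omega
  have hmul : ∀ r a : F, r ≠ 0 → a ≠ 0 → (IsSquare (r * a) ↔ (IsSquare r ↔ IsSquare a)) :=
    fun r a hr ha => mul_isSquare_iff' hchar hr ha
  have hneg1 : IsSquare (-1 : F) := by
    rw [FiniteField.isSquare_neg_one_iff, hq]; omega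
  -- card A = card B
  obtain ⟨n, hn⟩ := FiniteField.exists_nonsquare hchar
  have hn0 : n ≠ 0 := by rintro rfl; exact hn ⟨0, by ring⟩
  have hAB : A.card = B.card := by
    apply Finset.card_bij' (fun a _ => n * a) (fun b _ => n⁻¹ * b)
    · intro a ha
      simp only [hAdef, hBdef, mem_filter, mem_univ, true_and] at ha ⊢
      refine ⟨mul_ne_zero hn0 ha.1, ?_⟩
      rw [hmul n a hn0 ha.1]
      tauto
    · intro b hb
      simp only [hAdef, hBdef, mem_filter, mem_univ, true_and] at hb ⊢
      have h0 : n⁻¹ * b ≠ 0 := mul_ne_zero (inv_ne_zero hn0) hb.1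
      refine ⟨h0, ?_⟩
      have := hmul n (n⁻¹ * b) hn0 h0
      rw [show n * (n⁻¹ * b) = b by field_simp] at this
      tauto
    · intro a _; field_simp
    · intro b _; field_simp
  -- card A + card B = q - 1
  have hsum : A.card + B.card = q - 1 := by
    have hdisj : Disjoint A B := by
      rw [Finset.disjoint_left]
      intro a ha hb
      simp only [hAdef, hBdef, mem_filter] at ha hb
      exact hb.2.2 ha.2.2
    rw [← Finset.card_union_of_disjoint hdisj]
    have : A ∪ B = Finset.univ.erase 0 := by
      ext a
      simp only [hAdef, hBdef, mem_union, mem_filter, mem_univ, true_and, mem_erase, and_true]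
      tauto
    rw [this, Finset.card_erase_of_mem (mem_univ 0), Finset.card_univ, hq]
  have hA : A.card = 2 * k := by omega
  have hB : B.card = 2 * k := by omega
  -- no pair sums to zero
  have hzero : ((A ×ˢ B).filter (fun p => p.1 + p.2 = 0)).card = 0 := by
    rw [Finset.card_eq_zero, Finset.filter_eq_empty_iff]
    rintro ⟨a, b⟩ hab h0
    simp only [hAdef, hBdef, mem_product, mem_filter, mem_univ, true_and] at hab
    apply hab.2.2
    have hb : b = -1 * a := by linear_combination h0
    rw [hb, hmul (-1) a (by simp [neg_ne_zero]) hab.1.1]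
    tauto
  -- the fibers all have the same size
  have key : ∀ c d : F, c ≠ 0 → d ≠ 0 →
      ((A ×ˢ B).filter (fun p => p.1 + p.2 = c)).card ≤
        ((A ×ˢ B).filter (fun p => p.1 + p.2 = d)).card := by
    intro c d hc hd
    set r : F := d * c⁻¹ with hr
    have hr0 : r ≠ 0 := mul_ne_zero hd (inv_ne_zero hc)
    have hrc : r * c = d := by rw [hr]; field_simp
    apply Finset.card_le_card_of_injOn
      (fun p => if IsSquare r then (r * p.1, r * p.2) else (r * p.2, r * p.1))
    · intro p hp
      simp only [Finset.mem_coe, hAdef, hBdef, mem_filter, mem_product, mem_univ, true_and] at hp ⊢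
      obtain ⟨⟨⟨h1, h2⟩, h3, h4⟩, h5⟩ := hp
      by_cases hrs : IsSquare r
      · simp only [if_pos hrs]
        refine ⟨⟨⟨mul_ne_zero hr0 h1, ?_⟩, mul_ne_zero hr0 h3, ?_⟩, ?_⟩
        · rw [hmul r p.1 hr0 h1]; tauto
        · rw [hmul r p.2 hr0 h3]; tauto
        · rw [← hrc, ← h5]; ring
      · simp only [if_neg hrs]
        refine ⟨⟨⟨mul_ne_zero hr0 h3, ?_⟩, mul_ne_zero hr0 h1, ?_⟩, ?_⟩
        · rw [hmul r p.2 hr0 h3]; tauto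
        · rw [hmul r p.1 hr0 h1]; tauto
        · rw [← hrc, ← h5]; ring
    · intro p _ p' _ hpp
      dsimp only at hpp
      by_cases hrs : IsSquare r
      · rw [if_pos hrs, if_pos hrs, Prod.mk.injEq] at hpp
        exact Prod.ext (mul_left_cancel₀ hr0 hpp.1) (mul_left_cancel₀ hr0 hpp.2)
      · rw [if_neg hrs, if_neg hrs, Prod.mk.injEq] at hpp
        exact Prod.ext (mul_left_cancel₀ hr0 hpp.2) (mul_left_cancel₀ hr0 hpp.1)
  have keyeq : ∀ c d : F, c ≠ 0 → d ≠ 0 →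
      ((A ×ˢ B).filter (fun p => p.1 + p.2 = c)).card =
        ((A ×ˢ B).filter (fun p => p.1 + p.2 = d)).card :=
    fun c d hc hd => le_antisymm (key c d hc hd) (key d c hd hc)
  -- total count
  have htot : (A ×ˢ B).card = ∑ c ∈ Finset.univ.erase (0 : F),
      ((A ×ˢ B).filter (fun p => p.1 + p.2 = c)).card := by
    apply Finset.card_eq_sum_card_fiberwise
    intro p hp
    rw [Finset.mem_coe, Finset.mem_erase]
    refine ⟨?_, mem_univ _⟩
    intro h0
    have : p ∈ (A ×ˢ B).filter (fun p => p.1 + p.2 = 0) := by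
      rw [Finset.mem_filter]; exact ⟨hp, h0⟩
    rw [Finset.card_eq_zero] at hzero
    simp [hzero] at this
  have hone : (1 : F) ≠ 0 := one_ne_zero
  have hconst : ∑ c ∈ Finset.univ.erase (0 : F),
      ((A ×ˢ B).filter (fun p => p.1 + p.2 = c)).card =
      (q - 1) * ((A ×ˢ B).filter (fun p => p.1 + p.2 = 1)).card := by
    rw [Finset.sum_congr rfl (fun c hc => keyeq c 1 (Finset.mem_erase.mp hc).1 hone),
      Finset.sum_const, Finset.card_erase_of_mem (mem_univ 0), Finset.card_univ, hq,
      smul_eq_mul]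
  have hprod : (A ×ˢ B).card = 2 * k * (2 * k) := by
    rw [Finset.card_product, hA, hB]
  have hN1 : ((A ×ˢ B).filter (fun p => p.1 + p.2 = 1)).card = k := by
    have := htot
    rw [hconst, hprod] at this
    have h4k : q - 1 = 4 * k := by omega
    rw [h4k] at this
    have h2 : 4 * k * ((A ×ˢ B).filter (fun p => p.1 + p.2 = 1)).card = 4 * k * k := by
      rw [← this]; ring
    exact Nat.eq_of_mul_eq_mul_left (by omega) h2
  refine ⟨by omega, by omega, ?_, hzero⟩
  intro c hc
  rw [keyeq c 1 hc hone, hN1]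
  omega
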